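/- The torus character of ℂ* × ℂ* acting on χ(J_{λ'}, J_λ(-D_∞ + α D_0 + β D_1)) equals char_{αβ}(λ',λ) := -∑_{i≥0}∑_{i'≥0} q^{β+1}·((q^{λ'_{i'}}-1)(q^{-λ_i}-1)/(q-1))·q'^{α+i'-i}(q'-1) + ∑_{i≥0} q^{β+1}·((q^{-λ_i}-1)/(q-1))·q'^{α-i} - ∑_{i'≥0} q^{β+1}·((q^{λ'_{i'}}-1)/(q-1))·q'^{α+i'+1} + q q'·((q^β-1)/(q-1))·((q'^α-1)/(q'-1)). -/

import Mathlib

private lemma row_lemma {F : Type*} [Field F] {q q' : F} (hq0 : q ≠ 0) (hq'0 : q' ≠ 0)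
    (hq1 : q - 1 ≠ 0) (hq'1 : q' - 1 ≠ 0)
    (μ : ℕ → ℕ) (β α e d : ℤ) (m : ℕ) :
    ∑ j ∈ Finset.range m,
      q * q' * ((q ^ ((μ j : ℤ) - e + β) - 1) / (q - 1)) *
        ((q' ^ ((j : ℤ) - d + α) - 1) / (q' - 1))
    = q * q' / ((q - 1) * (q' - 1)) *
      (q ^ (β - e) * q' ^ (α - d) * (∑ j ∈ Finset.range m, q ^ (μ j : ℤ) * q' ^ (j : ℤ))
       - q ^ (β - e) * (∑ j ∈ Finset.range m, q ^ (μ j : ℤ))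
       - q' ^ (α - d) * (∑ j ∈ Finset.range m, q' ^ (j : ℤ)) + m) := by
  induction m with
  | zero => simp
  | succ m ih =>
    rw [Finset.sum_range_succ, Finset.sum_range_succ, Finset.sum_range_succ,
      Finset.sum_range_succ, ih,
      show (μ m : ℤ) - e + β = (μ m : ℤ) + (β - e) by ring,
      show (m : ℤ) - d + α = (m : ℤ) + (α - d) by ring,
      zpow_add₀ hq0, zpow_add₀ hq'0]
    push_cast
    field_simp
    ring

private lemma master_lemma {F : Type*} [Field F] {q q' : F} (hq0 : q ≠ 0) (hq'0 : q' ≠ 0)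
    (hq1 : q - 1 ≠ 0) (hq'1 : q' - 1 ≠ 0)
    (ν μ : ℕ → ℕ) (β α : ℤ) (n m : ℕ) :
    ∑ i ∈ Finset.range n, ∑ j ∈ Finset.range m,
      q * q' * ((q ^ ((μ j : ℤ) - ν i + β) - 1) / (q - 1)) *
        ((q' ^ ((j : ℤ) - i + α) - 1) / (q' - 1))
    = q * q' / ((q - 1) * (q' - 1)) *
      (q ^ β * q' ^ α * (∑ j ∈ Finset.range m, q ^ (μ j : ℤ) * q' ^ (j : ℤ))
          * (∑ i ∈ Finset.range n, q ^ (-(ν i : ℤ)) * q' ^ (-(i : ℤ)))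
       - q ^ β * (∑ j ∈ Finset.range m, q ^ (μ j : ℤ)) * (∑ i ∈ Finset.range n, q ^ (-(ν i : ℤ)))
       - q' ^ α * (∑ j ∈ Finset.range m, q' ^ (j : ℤ)) * (∑ i ∈ Finset.range n, q' ^ (-(i : ℤ)))
       + n * m) := by
  induction n with
  | zero => simp
  | succ n ih =>
    rw [Finset.sum_range_succ, ih, Finset.sum_range_succ, Finset.sum_range_succ,
      Finset.sum_range_succ, row_lemma hq0 hq'0 hq1 hq'1 μ β α (ν n) n m,
      show β - (ν n : ℤ) = β + -(ν n : ℤ) by ring,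
      show α - (n : ℤ) = α + -(n : ℤ) by ring,
      zpow_add₀ hq0, zpow_add₀ hq'0]
    push_cast
    ring


private lemma rhs_double {F : Type*} [Field F] {q q' : F} (hq0 : q ≠ 0) (hq'0 : q' ≠ 0)
    (ν μ : ℕ → ℕ) (γ δ : ℤ) (n m : ℕ) :
    ∑ i ∈ Finset.range n, ∑ j ∈ Finset.range m,
      q ^ γ * ((q ^ (μ j : ℤ) - 1) * (q ^ (-(ν i : ℤ)) - 1) / (q - 1)) *
        q' ^ (δ + (j : ℤ) - i) * (q' - 1)
    = q ^ γ * q' ^ δ * (q' - 1) / (q - 1) *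
      (((∑ i ∈ Finset.range n, q ^ (-(ν i : ℤ)) * q' ^ (-(i : ℤ)))
          - ∑ i ∈ Finset.range n, q' ^ (-(i : ℤ))) *
       ((∑ j ∈ Finset.range m, q ^ (μ j : ℤ) * q' ^ (j : ℤ))
          - ∑ j ∈ Finset.range m, q' ^ (j : ℤ))) := by
  have key : ∀ i j : ℕ,
      q ^ γ * ((q ^ (μ j : ℤ) - 1) * (q ^ (-(ν i : ℤ)) - 1) / (q - 1)) *
        q' ^ (δ + (j : ℤ) - i) * (q' - 1)
      = (q ^ γ * q' ^ δ * (q' - 1) / (q - 1) *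
          ((q ^ (-(ν i : ℤ)) - 1) * q' ^ (-(i : ℤ)))) *
        ((q ^ (μ j : ℤ) - 1) * q' ^ ((j : ℤ))) := by
    intro i j
    rw [show δ + (j : ℤ) - i = δ + (j : ℤ) + -(i : ℤ) by ring, zpow_add₀ hq'0,
      zpow_add₀ hq'0]
    ring
  calc ∑ i ∈ Finset.range n, ∑ j ∈ Finset.range m,
        q ^ γ * ((q ^ (μ j : ℤ) - 1) * (q ^ (-(ν i : ℤ)) - 1) / (q - 1)) *
          q' ^ (δ + (j : ℤ) - i) * (q' - 1)
      = (∑ i ∈ Finset.range n, q ^ γ * q' ^ δ * (q' - 1) / (q - 1) *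
          ((q ^ (-(ν i : ℤ)) - 1) * q' ^ (-(i : ℤ)))) *
        (∑ j ∈ Finset.range m, (q ^ (μ j : ℤ) - 1) * q' ^ ((j : ℤ))) := by
        rw [Finset.sum_mul_sum]
        exact Finset.sum_congr rfl fun i _ => Finset.sum_congr rfl fun j _ => key i j
    _ = _ := by
        rw [← Finset.mul_sum]
        simp only [sub_mul, one_mul, Finset.sum_sub_distrib]
        ring

private lemma rhs_single {F : Type*} [Field F] {q q' : F} (hq0 : q ≠ 0) (hq'0 : q' ≠ 0)
    (ν : ℕ → ℕ) (γ δ : ℤ) (n : ℕ) :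
    ∑ i ∈ Finset.range n, q ^ γ * ((q ^ (-(ν i : ℤ)) - 1) / (q - 1)) * q' ^ (δ - (i : ℤ))
    = q ^ γ * q' ^ δ / (q - 1) *
      ((∑ i ∈ Finset.range n, q ^ (-(ν i : ℤ)) * q' ^ (-(i : ℤ)))
        - ∑ i ∈ Finset.range n, q' ^ (-(i : ℤ))) := by
  have key : ∀ i : ℕ,
      q ^ γ * ((q ^ (-(ν i : ℤ)) - 1) / (q - 1)) * q' ^ (δ - (i : ℤ))
      = q ^ γ * q' ^ δ / (q - 1) *
          (q ^ (-(ν i : ℤ)) * q' ^ (-(i : ℤ)) - q' ^ (-(i : ℤ))) := by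
    intro i
    rw [show δ - (i : ℤ) = δ + -(i : ℤ) by ring, zpow_add₀ hq'0]
    ring
  rw [Finset.sum_congr rfl fun i _ => key i, ← Finset.mul_sum, Finset.sum_sub_distrib]

private lemma rhs_single' {F : Type*} [Field F] {q q' : F} (hq0 : q ≠ 0) (hq'0 : q' ≠ 0)
    (μ : ℕ → ℕ) (γ δ : ℤ) (m : ℕ) :
    ∑ j ∈ Finset.range m, q ^ γ * ((q ^ (μ j : ℤ) - 1) / (q - 1)) * q' ^ (δ + (j : ℤ) + 1)
    = q ^ γ * q' ^ δ * q' / (q - 1) *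
      ((∑ j ∈ Finset.range m, q ^ (μ j : ℤ) * q' ^ (j : ℤ))
        - ∑ j ∈ Finset.range m, q' ^ (j : ℤ)) := by
  have key : ∀ j : ℕ,
      q ^ γ * ((q ^ (μ j : ℤ) - 1) / (q - 1)) * q' ^ (δ + (j : ℤ) + 1)
      = q ^ γ * q' ^ δ * q' / (q - 1) *
          (q ^ (μ j : ℤ) * q' ^ (j : ℤ) - q' ^ (j : ℤ)) := by
    intro j
    rw [show δ + (j : ℤ) + 1 = δ + (j : ℤ) + (1:ℤ) by ring, zpow_add₀ hq'0, zpow_add₀ hq'0,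
      zpow_one]
    ring
  rw [Finset.sum_congr rfl fun j _ => key j, ← Finset.mul_sum, Finset.sum_sub_distrib]

private lemma geomP {F : Type*} [Field F] {q' : F} (hq'0 : q' ≠ 0) (hq'1 : q' - 1 ≠ 0)
    (n : ℕ) :
    ∑ i ∈ Finset.range n, q' ^ (-(i : ℤ)) = (q' - q' * q' ^ (-(n : ℤ))) / (q' - 1) := by
  induction n with
  | zero => simp
  | succ n ih =>
    rw [Finset.sum_range_succ, ih,
      show -((n+1 : ℕ) : ℤ) = -(n : ℤ) + (-1 : ℤ) by push_cast; ring,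
      show -((n : ℕ) : ℤ) = -(n : ℤ) by push_cast; ring,
      zpow_add₀ hq'0, zpow_neg_one]
    field_simp
    ring

private lemma geomQ {F : Type*} [Field F] {q' : F} (hq'0 : q' ≠ 0) (hq'1 : q' - 1 ≠ 0)
    (m : ℕ) :
    ∑ j ∈ Finset.range m, q' ^ ((j : ℤ)) = (q' ^ ((m : ℕ) : ℤ) - 1) / (q' - 1) := by
  induction m with
  | zero => simp
  | succ m ih =>
    rw [Finset.sum_range_succ, ih,
      show ((m+1 : ℕ) : ℤ) = (m : ℤ) + 1 by push_cast; ring,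
      zpow_add₀ hq'0, zpow_one]
    field_simp
    ring

set_option maxHeartbeats 4000000 in
/-- The torus character of `ℂ* × ℂ*` in
`χ(J_{λ'}, J_λ(-D_∞ + αD_0 + βD_1))`, computed from the monomial resolutions of the
ideals `J_λ, J_{λ'}` and `char_{a,b} = qq'((q^b-1)/(q-1))((q'^a-1)/(q'-1))`, equals the
claimed expression `char_{αβ}(λ',λ)` (with the infinite sums truncated at `t, t'`, beyond
which all their terms vanish). -/
theorem chi_character_of_monomial_ideals
    {F : Type*} [Field F] (q q' : F)
    (hq0 : q ≠ 0) (hq'0 : q' ≠ 0) (hq1 : q ≠ 1) (hq'1 : q' ≠ 1)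
    (lam lam' : ℕ → ℕ)
    (hmono : ∀ i, lam (i+1) ≤ lam i) (hmono' : ∀ i, lam' (i+1) ≤ lam' i)
    (t t' : ℕ) (ht : ∀ i, t ≤ i → lam i = 0) (ht' : ∀ i, t' ≤ i → lam' i = 0)
    (α β : ℤ) :
    let ch : ℤ → ℤ → F := fun a b =>
      q * q' * ((q ^ b - 1)/(q - 1)) * ((q' ^ a - 1)/(q' - 1));
    (∑ i ∈ Finset.range (t+1), ∑ i' ∈ Finset.range (t'+1),
        ch ((i' : ℤ) - i + α) ((lam' i' : ℤ) - lam i + β))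
    - (∑ i ∈ Finset.range (t+1), ∑ i' ∈ Finset.range t',
        ch ((i' : ℤ) - i + 1 + α) ((lam' i' : ℤ) - lam i + β))
    - (∑ i ∈ Finset.range t, ∑ i' ∈ Finset.range (t'+1),
        ch ((i' : ℤ) - i - 1 + α) ((lam' i' : ℤ) - lam i + β))
    + (∑ i ∈ Finset.range t, ∑ i' ∈ Finset.range t',
        ch ((i' : ℤ) - i + α) ((lam' i' : ℤ) - lam i + β))
    =
    -(∑ i ∈ Finset.range (t+1), ∑ i' ∈ Finset.range (t'+1),
        q ^ (β + 1) * ((q ^ (lam' i' : ℤ) - 1) * (q ^ (-(lam i : ℤ)) - 1)/(q - 1))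
          * q' ^ (α + (i' : ℤ) - i) * (q' - 1))
    + (∑ i ∈ Finset.range (t+1),
        q ^ (β + 1) * ((q ^ (-(lam i : ℤ)) - 1)/(q - 1)) * q' ^ (α - (i : ℤ)))
    - (∑ i' ∈ Finset.range (t'+1),
        q ^ (β + 1) * ((q ^ (lam' i' : ℤ) - 1)/(q - 1)) * q' ^ (α + (i' : ℤ) + 1))
    + q * q' * ((q ^ β - 1)/(q - 1)) * ((q' ^ α - 1)/(q' - 1)) := by
  intro ch
  have hq1' : q - 1 ≠ 0 := sub_ne_zero.mpr hq1
  have hq'1' : q' - 1 ≠ 0 := sub_ne_zero.mpr hq'1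
  have hlt : lam t = 0 := ht t le_rfl
  have hlt' : lam' t' = 0 := ht' t' le_rfl
  simp only [ch]
  simp only [show ∀ x y : ℤ, x - y + 1 + α = x - y + (α + 1) from fun x y => by ring,
    show ∀ x y : ℤ, x - y - 1 + α = x - y + (α - 1) from fun x y => by ring]
  rw [master_lemma hq0 hq'0 hq1' hq'1' lam lam' β α (t+1) (t'+1),
    master_lemma hq0 hq'0 hq1' hq'1' lam lam' β (α+1) (t+1) t',
    master_lemma hq0 hq'0 hq1' hq'1' lam lam' β (α-1) t (t'+1),
    master_lemma hq0 hq'0 hq1' hq'1' lam lam' β α t t',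
    rhs_double hq0 hq'0 lam lam' (β+1) α (t+1) (t'+1),
    rhs_single hq0 hq'0 lam (β+1) α (t+1),
    rhs_single' hq0 hq'0 lam' (β+1) α (t'+1)]
  have hA : (∑ i ∈ Finset.range (t+1), q ^ (-(lam i : ℤ)) * q' ^ (-(i : ℤ)))
      = (∑ i ∈ Finset.range t, q ^ (-(lam i : ℤ)) * q' ^ (-(i : ℤ))) + q' ^ (-(t : ℤ)) := by
    rw [Finset.sum_range_succ, hlt]; norm_num
  have hC : (∑ i ∈ Finset.range (t+1), q ^ (-(lam i : ℤ)))
      = (∑ i ∈ Finset.range t, q ^ (-(lam i : ℤ))) + 1 := by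
    rw [Finset.sum_range_succ, hlt]; norm_num
  have hB : (∑ j ∈ Finset.range (t'+1), q ^ ((lam' j : ℤ)) * q' ^ ((j : ℤ)))
      = (∑ j ∈ Finset.range t', q ^ ((lam' j : ℤ)) * q' ^ ((j : ℤ))) + q' ^ ((t' : ℕ) : ℤ) := by
    rw [Finset.sum_range_succ, hlt']; norm_num
  have hD : (∑ j ∈ Finset.range (t'+1), q ^ ((lam' j : ℤ)))
      = (∑ j ∈ Finset.range t', q ^ ((lam' j : ℤ))) + 1 := by
    rw [Finset.sum_range_succ, hlt']; norm_num
  rw [hA, hC, hB, hD, geomP hq'0 hq'1' (t+1), geomP hq'0 hq'1' t,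
    geomQ hq'0 hq'1' (t'+1), geomQ hq'0 hq'1' t',
    show -((t+1 : ℕ) : ℤ) = -(t : ℤ) + (-1 : ℤ) by push_cast; ring,
    show (((t'+1 : ℕ)) : ℤ) = ((t' : ℕ) : ℤ) + 1 by push_cast; ring]
  simp only [zpow_add₀ hq0, zpow_add₀ hq'0, zpow_sub₀ hq'0, zpow_one, zpow_neg_one]
  push_cast
  generalize (∑ i ∈ Finset.range t, q ^ (-(lam i : ℤ)) * q' ^ (-(i : ℤ))) = SA
  generalize (∑ i ∈ Finset.range t, q ^ (-(lam i : ℤ))) = SC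
  generalize (∑ j ∈ Finset.range t', q ^ ((lam' j : ℤ)) * q' ^ ((j : ℤ))) = SB
  generalize (∑ j ∈ Finset.range t', q ^ ((lam' j : ℤ))) = SD
  generalize q' ^ (-(t : ℤ)) = T
  generalize q' ^ ((t' : ℕ) : ℤ) = T'
  generalize q ^ β = qb
  generalize q' ^ α = qa
  rw [show q' - q' * (T * q'⁻¹) = q' - T by field_simp]
  have hden : ((q - 1) * ((q' - 1) * ((q' - 1) * ((q' - 1) * q')))) ≠ 0 :=
    mul_ne_zero hq1' (mul_ne_zero hq'1' (mul_ne_zero hq'1' (mul_ne_zero hq'1' hq'0)))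
  set den := (q - 1) * ((q' - 1) * ((q' - 1) * ((q' - 1) * q'))) with hden_def
  have h1 : q * q' / ((q - 1) * (q' - 1)) *
            (qb * qa * (SB + T') * (SA + T) - qb * (SD + 1) * (SC + 1) -
                qa * ((T' * q' - 1) / (q' - 1)) * ((q' - T) / (q' - 1)) +
              ((t:F) + 1) * ((t':F) + 1))
      = q * q' * q' * ((qb * qa * (SB + T') * (SA + T) - qb * (SD + 1) * (SC + 1)
            + ((t:F) + 1) * ((t':F) + 1)) * ((q' - 1) * (q' - 1))
          - qa * (T' * q' - 1) * (q' - T)) / den := by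
    rw [eq_div_iff hden, hden_def]; field_simp; try rw [div_eq_iff (by apply_rules [mul_ne_zero] <;> assumption)]
    ring
  have h2 : q * q' / ((q - 1) * (q' - 1)) *
            (qb * (qa * q') * SB * (SA + T) - qb * SD * (SC + 1) -
                qa * q' * ((T' - 1) / (q' - 1)) * ((q' - T) / (q' - 1)) +
              ((t:F) + 1) * (t':F))
      = q * q' * q' * ((qb * qa * q' * SB * (SA + T) - qb * SD * (SC + 1)
            + ((t:F) + 1) * (t':F)) * ((q' - 1) * (q' - 1))
          - qa * q' * (T' - 1) * (q' - T)) / den := by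
    rw [eq_div_iff hden, hden_def]; field_simp; try rw [div_eq_iff (by apply_rules [mul_ne_zero] <;> assumption)]
    ring
  have h3 : q * q' / ((q - 1) * (q' - 1)) *
          (qb * (qa / q') * (SB + T') * SA - qb * (SD + 1) * SC -
              qa / q' * ((T' * q' - 1) / (q' - 1)) * ((q' - q' * T) / (q' - 1)) +
            (t:F) * ((t':F) + 1))
      = q * q' * ((qb * qa * (SB + T') * SA) * ((q' - 1) * (q' - 1))
          + ((t:F) * ((t':F) + 1) - qb * (SD + 1) * SC) * (q' * ((q' - 1) * (q' - 1)))
          - qa * (T' * q' - 1) * (q' - q' * T)) / den := by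
    rw [eq_div_iff hden, hden_def]; field_simp; try rw [div_eq_iff (by apply_rules [mul_ne_zero] <;> assumption)]
    ring
  have h4 : q * q' / ((q - 1) * (q' - 1)) *
        (qb * qa * SB * SA - qb * SD * SC - qa * ((T' - 1) / (q' - 1)) * ((q' - q' * T) / (q' - 1)) + (t:F) * (t':F))
      = q * q' * q' * ((qb * qa * SB * SA - qb * SD * SC + (t:F) * (t':F)) * ((q' - 1) * (q' - 1))
          - qa * (T' - 1) * (q' - q' * T)) / den := by
    rw [eq_div_iff hden, hden_def]; field_simp; try rw [div_eq_iff (by apply_rules [mul_ne_zero] <;> assumption)]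
    ring
  have h5 : qb * q * qa * (q' - 1) / (q - 1) *
              ((SA + T - (q' - T) / (q' - 1)) * (SB + T' - (T' * q' - 1) / (q' - 1)))
      = qb * q * qa * q' * ((q' - 1) * (q' - 1)) *
          (((SA + T) * (q' - 1) - (q' - T)) * ((SB + T') * (q' - 1) - (T' * q' - 1))) / den := by
    rw [eq_div_iff hden, hden_def]; field_simp; try rw [div_eq_iff (by apply_rules [mul_ne_zero] <;> assumption)]
  have h6 : qb * q * qa / (q - 1) * (SA + T - (q' - T) / (q' - 1))
      = qb * q * qa * ((SA + T) * (q' - 1) - (q' - T)) * ((q' - 1) * ((q' - 1) * q')) / den := by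
    rw [eq_div_iff hden, hden_def]; field_simp; try rw [div_eq_iff (by apply_rules [mul_ne_zero] <;> assumption)]
  have h7 : qb * q * qa * q' / (q - 1) * (SB + T' - (T' * q' - 1) / (q' - 1))
      = qb * q * qa * q' * ((SB + T') * (q' - 1) - (T' * q' - 1)) * ((q' - 1) * ((q' - 1) * q')) / den := by
    rw [eq_div_iff hden, hden_def]; field_simp; try rw [div_eq_iff (by apply_rules [mul_ne_zero] <;> assumption)]
  have h8 : q * q' * ((qb - 1) / (q - 1)) * ((qa - 1) / (q' - 1))
      = q * q' * (qb - 1) * (qa - 1) * ((q' - 1) * ((q' - 1) * q')) / den := by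
    rw [eq_div_iff hden, hden_def]; field_simp; try rw [div_eq_iff (by apply_rules [mul_ne_zero] <;> assumption)]
  rw [h1, h2, h3, h4, h5, h6, h7, h8, div_sub_div_same, div_sub_div_same, ← add_div,
    ← neg_div, ← add_div, div_sub_div_same, ← add_div]
  rw [div_eq_div_iff hden hden]
  ring
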